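/- Let q be a twinless path 2-CQ in which the first T-node t_1 precedes the first F-node f_1, let ψ be a 3CNF with n_ψ clauses, let n ≥ (n_ψ + 2)(2|q| + 1), and let A_{q,ψ} be any (ψ, n)-gadget for q. If cov_A, A_{q,ψ} ⊭ q, then ψ is satisfiable. -/

import Mathlib

attribute [local instance] Classical.propDecidable

namespace DS

/-- Ground/query atoms over binary-predicate alphabet `σ` and node type `α`:
unary predicates `F`, `T`, `A` and binary predicates `R r`. -/
inductive At (σ α : Type) : Type
  | F : α → At σ α
  | T : α → At σ α
  | A : α → At σ α
  | R : σ → α → α → At σ α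

namespace At

/-- Renaming of the nodes of an atom. -/
def map {σ α β : Type} (h : α → β) : At σ α → At σ β
  | .F a => .F (h a)
  | .T a => .T (h a)
  | .A a => .A (h a)
  | .R r a b => .R r (h a) (h b)

/-- The nodes occurring in an atom. -/
def vars {σ α : Type} : At σ α → Set α
  | .F a => {a}
  | .T a => {a}
  | .A a => {a}
  | .R _ a b => {a, b}

end At

/-- An interpretation over domain `δ`. -/
structure Interp (σ δ : Type) where
  FS : δ → Prop
  TS : δ → Prop
  AS : δ → Prop
  RS : σ → δ → δ → Prop

/-- Truth of an atom in an interpretation. -/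
def Interp.satAt {σ δ : Type} (I : Interp σ δ) : At σ δ → Prop
  | .F a => I.FS a
  | .T a => I.TS a
  | .A a => I.AS a
  | .R r a b => I.RS r a b

/-- `I ⊨ q`: there is a homomorphism from the Boolean CQ `q` into `I`. -/
def Interp.satCQ {σ δ V : Type} (I : Interp σ δ) (q : Set (At σ V)) : Prop :=
  ∃ h : V → δ, ∀ a ∈ q, I.satAt (At.map h a)

/-- An ABox viewed as an interpretation over its own individuals. -/
def toInterp {σ α : Type} (A : Set (At σ α)) : Interp σ α where
  FS a := At.F a ∈ A
  TS a := At.T a ∈ A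
  AS a := At.A a ∈ A
  RS r a b := At.R r a b ∈ A

/-- An individual is undecided if it is labelled `A` but neither `F` nor `T`. -/
def undecided {σ α : Type} (A : Set (At σ α)) (a : α) : Prop :=
  At.A a ∈ A ∧ At.F a ∉ A ∧ At.T a ∉ A

/-- The minimal model of `cov_A` and the ABox `A` determined by a choice `c` of
one of `F`/`T` for each undecided `A`-individual. -/
def minModel {σ α : Type} (A : Set (At σ α)) (c : α → Bool) : Interp σ α where
  FS a := At.F a ∈ A ∨ (undecided A a ∧ c a = true)
  TS a := At.T a ∈ A ∨ (undecided A a ∧ c a = false)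
  AS a := At.A a ∈ A
  RS r a b := At.R r a b ∈ A

/-- `F` and `T` are interpreted disjointly. -/
def disjointFT {σ δ : Type} (I : Interp σ δ) : Prop := ∀ d : δ, ¬ (I.FS d ∧ I.TS d)

/-- Certain answer to the OMQ `(cov_A, q)` over the ABox `A`:
`q` holds in every minimal model of `cov_A` and `A`. -/
def covACert {σ α V : Type} (A : Set (At σ α)) (q : Set (At σ V)) : Prop :=
  ∀ c : α → Bool, (minModel A c).satCQ q

/-- Certain answer to the OMQ `(cov_A^⊥, q)` over the ABox `A`:
`q` holds in every minimal model of `cov_A^⊥` and `A` (the minimal models of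
`cov_A` in which `F` and `T` are disjoint). -/
def covABotCert {σ α V : Type} (A : Set (At σ α)) (q : Set (At σ V)) : Prop :=
  ∀ c : α → Bool, disjointFT (minModel A c) → (minModel A c).satCQ q

/-- No `FT`-twin occurs. -/
def twinFree {σ α : Type} (A : Set (At σ α)) : Prop :=
  ∀ a : α, ¬ (At.F a ∈ A ∧ At.T a ∈ A)

/-- A CQ does not use the unary predicate `A`. -/
def noA {σ V : Type} (q : Set (At σ V)) : Prop := ∀ v : V, At.A v ∉ q

/-- `x` occurs in `q`. -/
def occ {σ V : Type} (q : Set (At σ V)) (x : V) : Prop := ∃ a ∈ q, x ∈ At.vars a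

/-- Connectedness of a CQ. -/
def connCQ {σ V : Type} (q : Set (At σ V)) : Prop :=
  ∀ x y : V, occ q x → occ q y →
    Relation.ReflTransGen (fun u v => ∃ a ∈ q, u ∈ At.vars a ∧ v ∈ At.vars a) x y

/-- Solitary `F`-node of a CQ. -/
def solF {σ V : Type} (q : Set (At σ V)) (x : V) : Prop := At.F x ∈ q ∧ At.T x ∉ q

/-- Solitary `T`-node of a CQ. -/
def solT {σ V : Type} (q : Set (At σ V)) (y : V) : Prop := At.T y ∈ q ∧ At.F y ∉ q
/-- The path CQ with `m` edges labelled `ρ 0, …, ρ (m-1)` along the nodes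
`0, 1, …, m`, whose `F`-nodes are the elements of `FL` and whose `T`-nodes are
the elements of `TL`. -/
def pathCQ (σ : Type) (m : ℕ) (ρ : ℕ → σ) (FL TL : Set ℕ) : Set (At σ ℕ) :=
  {a | (∃ i, i < m ∧ a = At.R (ρ i) i (i + 1)) ∨
       (∃ i ∈ FL, a = At.F i) ∨ (∃ i ∈ TL, a = At.T i)}
/-- Gluing normalisation for the nodes of an `n`-cogwheel: the chosen `T`-node
of copy `j` is glued to (identified with) the chosen `F`-node of copy `j - 1`. -/
def wheelNorm (n : ℕ) (cT cF : ZMod n → ℕ) (p : ZMod n × ℕ) : ZMod n × ℕ :=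
  if p.2 = cT p.1 then (p.1 - 1, cF (p.1 - 1)) else p

/-- The copy of `q` used in a cogwheel: the labels `T`/`F` of the two chosen
contact nodes are replaced by `A`. -/
def contactCopy {σ : Type} (q : Set (At σ ℕ)) (tpos fpos : ℕ) : Set (At σ ℕ) :=
  insert (At.A tpos) (insert (At.A fpos) (q \ {At.T tpos, At.F fpos}))

/-- The `n`-cogwheel for the path CQ `q` with contact choices `cT j ∈ TL`,
`cF j ∈ FL` (in the `j`-th copy of `q`): the `n` copies are arranged in a cycle,
gluing the `F`-contact of copy `j` to the `T`-contact of copy `j + 1`. -/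
def cogwheel (σ : Type) (n : ℕ) (q : Set (At σ ℕ)) (cT cF : ZMod n → ℕ) :
    Set (At σ (ZMod n × ℕ)) :=
  {a | ∃ j : ZMod n, ∃ b ∈ contactCopy q (cT j) (cF j),
        a = At.map (fun v => wheelNorm n cT cF (j, v)) b}

/-- The contact-distance between the contacts with indices `a` and `b`. -/
def cdist {n : ℕ} (a b : ZMod n) : ℕ := min (ZMod.val (a - b)) (ZMod.val (b - a))
abbrev BInd (n : ℕ) : Type := (Bool × ZMod n × ℕ) ⊕ (Bool × ℕ)

/-- Gluing normalisation inside the wheel `w` of a bike. -/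
def bwNorm (n : ℕ) (cT cF : Bool → ZMod n → ℕ) (w : Bool) (j : ZMod n) (v : ℕ) :
    Bool × ZMod n × ℕ :=
  if v = cT w j then (w, j - 1, cF w (j - 1)) else (w, j, v)

/-- The renaming of the copy `q_F`: its node `ff1` (= `c_F^•`) is glued to the
contact with index `iB •` of `W_•`, its node `ff2` (= `c_F^∘`) to the contact
with index `iB ∘` of `W_∘`; other nodes are fresh. -/
def embF (n : ℕ) (cF : Bool → ZMod n → ℕ) (iB : Bool → ZMod n)
    (ff1 ff2 : ℕ) (v : ℕ) : BInd n :=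
  if v = ff1 then Sum.inl (true, iB true, cF true (iB true))
  else if v = ff2 then Sum.inl (false, iB false, cF false (iB false))
  else Sum.inr (false, v)

/-- The renaming of the copy `q_T`: its node `tt1` (= `c_T^•`) is glued to the
contact with index `jB •` of `W_•`, its node `tt2` (= `c_T^∘`) to the contact
with index `jB ∘` of `W_∘`; other nodes are fresh. -/
def embT (n : ℕ) (cF : Bool → ZMod n → ℕ) (jB : Bool → ZMod n)
    (tt1 tt2 : ℕ) (v : ℕ) : BInd n :=
  if v = tt1 then Sum.inl (true, jB true, cF true (jB true))
  else if v = tt2 then Sum.inl (false, jB false, cF false (jB false))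
  else Sum.inr (true, v)

/-- The `n`-bike for `q` built from the two `n`-cogwheels with contact choices
`cT w`, `cF w` and the copies `q_F` (with the `F`-labels of `ff1 ≺ ff2` replaced
by `A`, glued to the contacts `iB w`) and `q_T` (with the `T`-labels of
`tt1 ≺ tt2` replaced by `A`, glued to the contacts `jB w`). -/
def bike (σ : Type) (n : ℕ) (q : Set (At σ ℕ)) (cT cF : Bool → ZMod n → ℕ)
    (iB jB : Bool → ZMod n) (ff1 ff2 tt1 tt2 : ℕ) : Set (At σ (BInd n)) :=
  {a | ∃ w j, ∃ b ∈ contactCopy q (cT w j) (cF w j),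
        a = At.map (fun v => Sum.inl (bwNorm n cT cF w j v)) b} ∪
  (At.map (embF n cF iB ff1 ff2) ''
    (insert (At.A ff1) (insert (At.A ff2) (q \ {At.F ff1, At.F ff2})))) ∪
  (At.map (embT n cF jB tt1 tt2) ''
    (insert (At.A tt1) (insert (At.A tt2) (q \ {At.T tt1, At.T tt2}))))

/-- Rules (p1)/(p2): the wheel (of the bike of the variable of the literal
`ℓ^c_z`) to which the `c`-connection `ℓ_z` is glued: `W_•` (value `true`) iff
either the literal is positive and `ℓ_z` is an `F`-node, or the literal is
negative and `ℓ_z` is a `T`-node; `W_∘` (value `false`) otherwise. -/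
noncomputable def wSel (FL TL : Set ℕ) {V0 K : ℕ} (ψ : Fin K → Fin 3 → Bool × Fin V0)
    (l : Fin 3 → ℕ) (c : Fin K) (z : Fin 3) : Bool :=
  if ((ψ c z).1 = true ∧ l z ∈ FL) ∨ ((ψ c z).1 = false ∧ l z ∈ TL) then true else false

/-- The wheel contact to which the `c`-connection `ℓ_z` is glued. -/
noncomputable def cTgt (n : ℕ) {V0 K : ℕ} (ψ : Fin K → Fin 3 → Bool × Fin V0)
    (cF : Fin V0 → Bool → ZMod n → ℕ) (FL TL : Set ℕ) (l : Fin 3 → ℕ)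
    (gi : Fin K → Fin 3 → ZMod n) (c : Fin K) (z : Fin 3) :
    (Fin V0 × BInd n) ⊕ (Fin K × ℕ) :=
  Sum.inl ((ψ c z).2, Sum.inl (wSel FL TL ψ l c z, gi c z,
    cF (ψ c z).2 (wSel FL TL ψ l c z) (gi c z)))

/-- The renaming of the fresh copy `q^c` of `q` for the clause `c`: the three
special-triple nodes are glued to wheel contacts, the others are fresh. -/
noncomputable def embC (n : ℕ) {V0 K : ℕ} (ψ : Fin K → Fin 3 → Bool × Fin V0)
    (cF : Fin V0 → Bool → ZMod n → ℕ) (FL TL : Set ℕ) (l : Fin 3 → ℕ)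
    (gi : Fin K → Fin 3 → ZMod n) (c : Fin K) (v : ℕ) :
    (Fin V0 × BInd n) ⊕ (Fin K × ℕ) :=
  if v = l 0 then cTgt n ψ cF FL TL l gi c 0
  else if v = l 1 then cTgt n ψ cF FL TL l gi c 1
  else if v = l 2 then cTgt n ψ cF FL TL l gi c 2
  else Sum.inr (c, v)

/-- The copy of `q` used for a clause: the `F`/`T`-labels of the special triple
are replaced by `A`. -/
def clauseCopy {σ : Type} (q : Set (At σ ℕ)) (l : Fin 3 → ℕ) : Set (At σ ℕ) :=
  insert (At.A (l 0)) (insert (At.A (l 1)) (insert (At.A (l 2))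
    (q \ {At.F (l 0), At.T (l 0), At.F (l 1), At.T (l 1), At.F (l 2), At.T (l 2)})))

/-- The `(ψ, n)`-gadget `A_{q,ψ}`: a fresh `n`-bike for each propositional
variable of `ψ`, plus, for each clause `c`, a fresh copy of `q` whose
special-triple nodes are glued to wheel contacts according to (p1)/(p2). -/
noncomputable def gadget (σ : Type) (n m : ℕ) (ρ : ℕ → σ) (FL TL : Set ℕ)
    {V0 K : ℕ} (ψ : Fin K → Fin 3 → Bool × Fin V0)
    (cT cF : Fin V0 → Bool → ZMod n → ℕ) (iB jB : Fin V0 → Bool → ZMod n)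
    (fB tB : Fin V0 → Bool → ℕ) (l : Fin 3 → ℕ) (gi : Fin K → Fin 3 → ZMod n) :
    Set (At σ ((Fin V0 × BInd n) ⊕ (Fin K × ℕ))) :=
  {a | ∃ p : Fin V0, ∃ b ∈ bike σ n (pathCQ σ m ρ FL TL) (cT p) (cF p) (iB p) (jB p)
        (fB p true) (fB p false) (tB p true) (tB p false),
        a = At.map (fun u => (Sum.inl (p, u) : (Fin V0 × BInd n) ⊕ (Fin K × ℕ))) b} ∪
  {a | ∃ c : Fin K, ∃ b ∈ clauseCopy (pathCQ σ m ρ FL TL) l,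
        a = At.map (embC n ψ cF FL TL l gi c) b}

/-- Let `q` be a twinless path `2`-CQ with `t₁ ≺ f₁`, let `ψ`
be a 3CNF with `K` clauses, let `n ≥ (K + 2)(2|q| + 1)`, and let `A_{q,ψ}` be
any `(ψ, n)`-gadget for `q` (bikes for the variables, clause copies glued by
(p1)/(p2), with the `c`-neighbourhoods pairwise disjoint and disjoint from the
`F`- and `T`-neighbourhoods of the bikes).  If `cov_A, A_{q,ψ} ⊭ q`, then `ψ`
is satisfiable. -/
theorem statement_18 {σ : Type} (m n : ℕ) (ρ : ℕ → σ) (FL TL : Set ℕ)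
    {V0 K : ℕ} (ψ : Fin K → Fin 3 → Bool × Fin V0)
    (cT cF : Fin V0 → Bool → ZMod n → ℕ) (iB jB : Fin V0 → Bool → ZMod n)
    (fB tB : Fin V0 → Bool → ℕ) (l : Fin 3 → ℕ) (gi : Fin K → Fin 3 → ZMod n)
    -- q is a twinless path 2-CQ with t₁ ≺ f₁
    (hm : 0 < m) (hFL : FL ⊆ Set.Iic m) (hTL : TL ⊆ Set.Iic m)
    (hdisj : ∀ i, ¬ (i ∈ FL ∧ i ∈ TL))
    (hF2 : FL.Nontrivial) (hT2 : TL.Nontrivial)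
    (ht1f1 : sInf TL < sInf FL)
    -- size of the gadget wheels
    (hn : (K + 2) * (2 * m + 1) ≤ n)
    -- the wheels of the bikes: contacts are T-/F-nodes
    (hcT : ∀ p w j, cT p w j ∈ TL) (hcF : ∀ p w j, cF p w j ∈ FL)
    -- the connecting copies of each bike use F-nodes c_F^• ≺ c_F^∘ and T-nodes c_T^• ≺ c_T^∘
    (hfB : ∀ p w, fB p w ∈ FL) (hfBlt : ∀ p, fB p true < fB p false)
    (htB : ∀ p w, tB p w ∈ TL) (htBlt : ∀ p, tB p true < tB p false)
    -- in each wheel, the F- and T-connections are at contact-distance > 2|q|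
    (hfar : ∀ p w, 2 * m < cdist (iB p w) (jB p w))
    -- the special triple: ℓ₁ ≺ ℓ₂ ≺ ℓ₃, each an F-node or a T-node of q
    (hl12 : l 0 < l 1) (hl23 : l 1 < l 2)
    (hlFT : ∀ z, l z ∈ FL ∪ TL)
    -- the c-neighbourhoods are pairwise disjoint ...
    (hcc : ∀ c z c' z', ¬ (c = c' ∧ z = z') →
      (ψ c z).2 = (ψ c' z').2 → wSel FL TL ψ l c z = wSel FL TL ψ l c' z' →
      2 * m < cdist (gi c z) (gi c' z'))
    -- ... and disjoint from the F- and T-neighbourhoods of the bikes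
    (hcb : ∀ c z, 2 * m < cdist (gi c z) (iB (ψ c z).2 (wSel FL TL ψ l c z)) ∧
      2 * m < cdist (gi c z) (jB (ψ c z).2 (wSel FL TL ψ l c z))) :
    ¬ covACert (gadget σ n m ρ FL TL ψ cT cF iB jB fB tB l gi) (pathCQ σ m ρ FL TL) →
      ∃ τ : Fin V0 → Bool, ∀ c : Fin K, ∃ z : Fin 3, τ (ψ c z).2 = (ψ c z).1 := by
  intro hncert
  simp only [covACert, not_forall] at hncert
  obtain ⟨col, hcol⟩ := hncert
  set G := gadget σ n m ρ FL TL ψ cT cF iB jB fB tB l gi with hG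
  -- basic facts
  have hFT : ∀ {i : ℕ}, i ∈ FL → i ∈ TL → False := fun hF hT => hdisj _ ⟨hF, hT⟩
  have hne_cFcT : ∀ (p p' : Fin V0) (w w' : Bool) (j j' : ZMod n),
      cF p w j ≠ cT p' w' j' := fun p p' w w' j j' h => hFT (hcF p w j) (h ▸ hcT p' w' j')
  have hqF : ∀ i ∈ FL, (At.F i : At σ ℕ) ∈ pathCQ σ m ρ FL TL :=
    fun i hi => Or.inr (Or.inl ⟨i, hi, rfl⟩)
  have hqT : ∀ i ∈ TL, (At.T i : At σ ℕ) ∈ pathCQ σ m ρ FL TL :=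
    fun i hi => Or.inr (Or.inr ⟨i, hi, rfl⟩)
  have hqR : ∀ i, i < m → (At.R (ρ i) i (i+1) : At σ ℕ) ∈ pathCQ σ m ρ FL TL :=
    fun i hi => Or.inl ⟨i, hi, rfl⟩
  -- reduction lemmas for the gluing maps
  have hbwF : ∀ p w j, bwNorm n (cT p) (cF p) w j (cF p w j) = (w, j, cF p w j) := by
    intro p w j; simp only [bwNorm]; rw [if_neg (hne_cFcT p p w w j j)]
  have hbwT : ∀ p w j, bwNorm n (cT p) (cF p) w j (cT p w j) = (w, j - 1, cF p w (j-1)) := by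
    intro p w j; simp [bwNorm]
  have hbwO : ∀ p w j v, v ≠ cT p w j → bwNorm n (cT p) (cF p) w j v = (w, j, v) := by
    intro p w j v hv; simp only [bwNorm]; rw [if_neg hv]
  -- membership lemmas
  have hmemW : ∀ (p : Fin V0) (w : Bool) (j : ZMod n) (b : At σ ℕ),
      b ∈ contactCopy (pathCQ σ m ρ FL TL) (cT p w j) (cF p w j) →
      At.map (fun v => (Sum.inl (p, Sum.inl (bwNorm n (cT p) (cF p) w j v)) :
        (Fin V0 × BInd n) ⊕ (Fin K × ℕ))) b ∈ G := by
    intro p w j b hb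
    rw [hG]
    refine Set.mem_union_left _ ?_
    refine ⟨p, At.map (fun v => Sum.inl (bwNorm n (cT p) (cF p) w j v)) b,
      Set.mem_union_left _ (Set.mem_union_left _ ⟨w, j, b, hb, rfl⟩), ?_⟩
    cases b <;> rfl
  have hmemF : ∀ (p : Fin V0) (b : At σ ℕ),
      b ∈ insert (At.A (fB p true)) (insert (At.A (fB p false))
        (pathCQ σ m ρ FL TL \ {At.F (fB p true), At.F (fB p false)})) →
      At.map (fun v => (Sum.inl (p, embF n (cF p) (iB p) (fB p true) (fB p false) v) :
        (Fin V0 × BInd n) ⊕ (Fin K × ℕ))) b ∈ G := by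
    intro p b hb
    rw [hG]
    refine Set.mem_union_left _ ?_
    refine ⟨p, At.map (embF n (cF p) (iB p) (fB p true) (fB p false)) b,
      Set.mem_union_left _ (Set.mem_union_right _ ⟨b, hb, rfl⟩), ?_⟩
    cases b <;> rfl
  have hmemT : ∀ (p : Fin V0) (b : At σ ℕ),
      b ∈ insert (At.A (tB p true)) (insert (At.A (tB p false))
        (pathCQ σ m ρ FL TL \ {At.T (tB p true), At.T (tB p false)})) →
      At.map (fun v => (Sum.inl (p, embT n (cF p) (jB p) (tB p true) (tB p false) v) :
        (Fin V0 × BInd n) ⊕ (Fin K × ℕ))) b ∈ G := by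
    intro p b hb
    rw [hG]
    refine Set.mem_union_left _ ?_
    refine ⟨p, At.map (embT n (cF p) (jB p) (tB p true) (tB p false)) b,
      Set.mem_union_right _ ⟨b, hb, rfl⟩, ?_⟩
    cases b <;> rfl
  have hmemC : ∀ (c : Fin K) (b : At σ ℕ), b ∈ clauseCopy (pathCQ σ m ρ FL TL) l →
      At.map (embC n ψ cF FL TL l gi c) b ∈ G := by
    intro c b hb
    rw [hG]
    exact Set.mem_union_right _ ⟨c, b, hb, rfl⟩
  -- satisfaction helpers
  have hsatF : ∀ (h : ℕ → (Fin V0 × BInd n) ⊕ (Fin K × ℕ)) (i : ℕ),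
      (At.F (h i) ∈ G ∨ (undecided G (h i) ∧ col (h i) = true)) →
      (minModel G col).satAt (At.map h (At.F i)) := fun h i hx => hx
  have hsatT : ∀ (h : ℕ → (Fin V0 × BInd n) ⊕ (Fin K × ℕ)) (i : ℕ),
      (At.T (h i) ∈ G ∨ (undecided G (h i) ∧ col (h i) = false)) →
      (minModel G col).satAt (At.map h (At.T i)) := fun h i hx => hx
  have hsatR : ∀ (h : ℕ → (Fin V0 × BInd n) ⊕ (Fin K × ℕ)) (r : σ) (i i' : ℕ),
      At.R r (h i) (h i') ∈ G → (minModel G col).satAt (At.map h (At.R r i i')) :=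
    fun h r i i' hx => hx
  -- contactCopy membership helpers
  have hccR : ∀ (p : Fin V0) (w : Bool) (j : ZMod n) (i : ℕ), i < m →
      (At.R (ρ i) i (i+1) : At σ ℕ) ∈ contactCopy (pathCQ σ m ρ FL TL) (cT p w j) (cF p w j) :=
    fun p w j i hi => Or.inr (Or.inr ⟨hqR i hi, by simp⟩)
  have hccF : ∀ (p : Fin V0) (w : Bool) (j : ZMod n) (i : ℕ), i ∈ FL → i ≠ cF p w j →
      (At.F i : At σ ℕ) ∈ contactCopy (pathCQ σ m ρ FL TL) (cT p w j) (cF p w j) :=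
    fun p w j i hi hne => Or.inr (Or.inr ⟨hqF i hi, by simp [hne]⟩)
  have hccT : ∀ (p : Fin V0) (w : Bool) (j : ZMod n) (i : ℕ), i ∈ TL → i ≠ cT p w j →
      (At.T i : At σ ℕ) ∈ contactCopy (pathCQ σ m ρ FL TL) (cT p w j) (cF p w j) :=
    fun p w j i hi hne => Or.inr (Or.inr ⟨hqT i hi, by simp [hne]⟩)
  -- the contacts are undecided
  have hund : ∀ (p : Fin V0) (w : Bool) (j : ZMod n),
      undecided G (Sum.inl (p, Sum.inl (w, j, cF p w j)) : (Fin V0 × BInd n) ⊕ (Fin K × ℕ)) := by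
    intro p w j
    refine ⟨?_, ?_, ?_⟩
    · -- the A-label is there
      have hb : (At.A (cF p w j) : At σ ℕ) ∈
          contactCopy (pathCQ σ m ρ FL TL) (cT p w j) (cF p w j) := Or.inr (Or.inl rfl)
      have h2 := hmemW p w j _ hb
      simpa [At.map, hbwF p w j] using h2
    · -- no F-label
      intro hmem
      rw [hG] at hmem
      rcases hmem with hmem | hmem
      · obtain ⟨p', b, hb, heq⟩ := hmem
        rcases hb with (hb | hb) | hb
        · obtain ⟨w', j', b2, hb2, rfl⟩ := hb
          cases b2 with
          | F v =>
            rcases hb2 with h | h | ⟨hq, hno⟩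
            · cases h
            · cases h
            · have hvFL : v ∈ FL := by
                rcases hq with ⟨i, _, he⟩ | ⟨i, hi, he⟩ | ⟨i, _, he⟩
                · cases he
                · cases he; exact hi
                · cases he
              have hne2 : v ≠ cF p' w' j' := fun h => hno (Or.inr (congrArg At.F h))
              have hvne : v ≠ cT p' w' j' := fun h => hFT hvFL (h ▸ hcT p' w' j')
              refine absurd heq ?_
              intro h2
              simp only [At.map, hbwO p' w' j' v hvne, At.F.injEq, Sum.inl.injEq,
                Prod.mk.injEq] at h2
              obtain ⟨hp, hw2, hj2, hv⟩ := h2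
              exact hne2 (by rw [← hp, ← hw2, ← hj2, ← hv])
          | T v => exact absurd heq (by simp [At.map])
          | A v => exact absurd heq (by simp [At.map])
          | R r v v' => exact absurd heq (by simp [At.map])
        · obtain ⟨b2, hb2, rfl⟩ := hb
          cases b2 with
          | F v =>
            rcases hb2 with h | h | ⟨hq, hno⟩
            · cases h
            · cases h
            · have ne1 : v ≠ fB p' true := fun h => hno (Or.inl (congrArg At.F h))
              have ne2 : v ≠ fB p' false := fun h => hno (Or.inr (congrArg At.F h))
              exact absurd heq (by simp [At.map, embF, ne1, ne2])
          | T v => exact absurd heq (by simp [At.map])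
          | A v => exact absurd heq (by simp [At.map])
          | R r v v' => exact absurd heq (by simp [At.map])
        · obtain ⟨b2, hb2, rfl⟩ := hb
          cases b2 with
          | F v =>
            rcases hb2 with h | h | ⟨hq, hno⟩
            · cases h
            · cases h
            · have hvFL : v ∈ FL := by
                rcases hq with ⟨i, _, he⟩ | ⟨i, hi, he⟩ | ⟨i, _, he⟩
                · cases he
                · cases he; exact hi
                · cases he
              have ne1 : v ≠ tB p' true := fun h => hFT hvFL (h ▸ htB p' true)
              have ne2 : v ≠ tB p' false := fun h => hFT hvFL (h ▸ htB p' false)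
              exact absurd heq (by simp [At.map, embT, ne1, ne2])
          | T v => exact absurd heq (by simp [At.map])
          | A v => exact absurd heq (by simp [At.map])
          | R r v v' => exact absurd heq (by simp [At.map])
      · obtain ⟨c, b2, hb2, heq⟩ := hmem
        cases b2 with
        | F v =>
          rcases hb2 with h | h | h | ⟨hq, hno⟩
          · cases h
          · cases h
          · cases h
          · have ne0 : v ≠ l 0 := fun h => hno (Or.inl (congrArg At.F h))
            have ne1 : v ≠ l 1 := fun h =>
              hno (Or.inr (Or.inr (Or.inl (congrArg At.F h))))
            have ne2 : v ≠ l 2 := fun h =>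
              hno (Or.inr (Or.inr (Or.inr (Or.inr (Or.inl (congrArg At.F h))))))
            exact absurd heq (by simp [At.map, embC, ne0, ne1, ne2])
        | T v => exact absurd heq (by simp [At.map])
        | A v => exact absurd heq (by simp [At.map])
        | R r v v' => exact absurd heq (by simp [At.map])
    · -- no T-label
      intro hmem
      rw [hG] at hmem
      rcases hmem with hmem | hmem
      · obtain ⟨p', b, hb, heq⟩ := hmem
        rcases hb with (hb | hb) | hb
        · obtain ⟨w', j', b2, hb2, rfl⟩ := hb
          cases b2 with
          | T v =>
            rcases hb2 with h | h | ⟨hq, hno⟩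
            · cases h
            · cases h
            · have hvTL : v ∈ TL := by
                rcases hq with ⟨i, _, he⟩ | ⟨i, _, he⟩ | ⟨i, hi, he⟩
                · cases he
                · cases he
                · cases he; exact hi
              have hvne : v ≠ cT p' w' j' := fun h => hno (Or.inl (congrArg At.T h))
              refine absurd heq ?_
              intro h2
              simp only [At.map, hbwO p' w' j' v hvne, At.T.injEq, Sum.inl.injEq,
                Prod.mk.injEq] at h2
              obtain ⟨hp, hw2, hj2, hv⟩ := h2
              exact hFT (hcF p w j) (by rw [hv]; exact hvTL)
          | F v => exact absurd heq (by simp [At.map])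
          | A v => exact absurd heq (by simp [At.map])
          | R r v v' => exact absurd heq (by simp [At.map])
        · obtain ⟨b2, hb2, rfl⟩ := hb
          cases b2 with
          | T v =>
            rcases hb2 with h | h | ⟨hq, hno⟩
            · cases h
            · cases h
            · have hvTL : v ∈ TL := by
                rcases hq with ⟨i, _, he⟩ | ⟨i, _, he⟩ | ⟨i, hi, he⟩
                · cases he
                · cases he
                · cases he; exact hi
              have ne1 : v ≠ fB p' true := fun h => hFT (h ▸ hfB p' true) hvTL
              have ne2 : v ≠ fB p' false := fun h => hFT (h ▸ hfB p' false) hvTL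
              exact absurd heq (by simp [At.map, embF, ne1, ne2])
          | F v => exact absurd heq (by simp [At.map])
          | A v => exact absurd heq (by simp [At.map])
          | R r v v' => exact absurd heq (by simp [At.map])
        · obtain ⟨b2, hb2, rfl⟩ := hb
          cases b2 with
          | T v =>
            rcases hb2 with h | h | ⟨hq, hno⟩
            · cases h
            · cases h
            · have ne1 : v ≠ tB p' true := fun h => hno (Or.inl (congrArg At.T h))
              have ne2 : v ≠ tB p' false := fun h => hno (Or.inr (congrArg At.T h))
              exact absurd heq (by simp [At.map, embT, ne1, ne2])
          | F v => exact absurd heq (by simp [At.map])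
          | A v => exact absurd heq (by simp [At.map])
          | R r v v' => exact absurd heq (by simp [At.map])
      · obtain ⟨c, b2, hb2, heq⟩ := hmem
        cases b2 with
        | T v =>
          rcases hb2 with h | h | h | ⟨hq, hno⟩
          · cases h
          · cases h
          · cases h
          · have ne0 : v ≠ l 0 := fun h =>
              hno (Or.inr (Or.inl (congrArg At.T h)))
            have ne1 : v ≠ l 1 := fun h =>
              hno (Or.inr (Or.inr (Or.inr (Or.inl (congrArg At.T h)))))
            have ne2 : v ≠ l 2 := fun h =>
              hno (Or.inr (Or.inr (Or.inr (Or.inr (Or.inr (congrArg At.T h))))))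
            exact absurd heq (by simp [At.map, embC, ne0, ne1, ne2])
        | F v => exact absurd heq (by simp [At.map])
        | A v => exact absurd heq (by simp [At.map])
        | R r v v' => exact absurd heq (by simp [At.map])
  -- a T-coloured contact followed by an F-coloured contact yields a match
  have hwheelstep : ∀ (p : Fin V0) (w : Bool) (j : ZMod n),
      ¬ (col (Sum.inl (p, Sum.inl (w, j - 1, cF p w (j-1)))) = false ∧
         col (Sum.inl (p, Sum.inl (w, j, cF p w j))) = true) := by
    rintro p w j ⟨h1, h2⟩
    apply hcol
    refine ⟨fun v => Sum.inl (p, Sum.inl (bwNorm n (cT p) (cF p) w j v)), ?_⟩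
    intro a ha
    rcases ha with ⟨i, him, rfl⟩ | ⟨i, hiF, rfl⟩ | ⟨i, hiT, rfl⟩
    · exact hsatR _ _ _ _ (hmemW p w j _ (hccR p w j i him))
    · by_cases hic : i = cF p w j
      · subst hic
        refine hsatF _ _ (Or.inr ?_)
        have e : bwNorm n (cT p) (cF p) w j (cF p w j) = (w, j, cF p w j) := hbwF p w j
        simp only [e]
        exact ⟨hund p w j, h2⟩
      · exact hsatF _ _ (Or.inl (hmemW p w j _ (hccF p w j i hiF hic)))
    · by_cases hic : i = cT p w j
      · subst hic
        refine hsatT _ _ (Or.inr ?_)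
        have e : bwNorm n (cT p) (cF p) w j (cT p w j) = (w, j - 1, cF p w (j-1)) := hbwT p w j
        simp only [e]
        exact ⟨hund p w (j-1), h1⟩
      · exact hsatT _ _ (Or.inl (hmemW p w j _ (hccT p w j i hiT hic)))
  -- each wheel is monochromatic
  haveI : NeZero n := ⟨by nlinarith⟩
  have hmono : ∀ (p : Fin V0) (w : Bool),
      (∀ j : ZMod n, col (Sum.inl (p, Sum.inl (w, j, cF p w j))) = true) ∨
      (∀ j : ZMod n, col (Sum.inl (p, Sum.inl (w, j, cF p w j))) = false) := by
    intro p w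
    by_cases hall : ∀ j : ZMod n, col (Sum.inl (p, Sum.inl (w, j, cF p w j))) = true
    · exact Or.inl hall
    right
    push_neg at hall
    obtain ⟨j0, hj0⟩ := hall
    replace hj0 : col (Sum.inl (p, Sum.inl (w, j0, cF p w j0))) = false := by simpa using hj0
    have key : ∀ k : ℕ, col (Sum.inl (p, Sum.inl (w, j0 + (k : ZMod n), cF p w (j0 + (k : ZMod n))))) = false := by
      intro k
      induction k with
      | zero => simpa using hj0
      | succ k ih =>
        by_contra hcon
        replace hcon : col (Sum.inl (p, Sum.inl (w, j0 + ((k+1:ℕ) : ZMod n), cF p w (j0 + ((k+1:ℕ) : ZMod n))))) = true := by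
          simpa using hcon
        refine hwheelstep p w (j0 + ((k+1 : ℕ) : ZMod n)) ⟨?_, hcon⟩
        have e : (j0 + ((k+1 : ℕ) : ZMod n)) - 1 = j0 + (k : ZMod n) := by push_cast; ring
        rw [e]; exact ih
    intro j
    have e : j0 + ((j - j0).val : ZMod n) = j := by
      rw [ZMod.natCast_rightInverse (j - j0)]; ring
    have := key (j - j0).val
    rwa [e] at this
  -- opposite colours in the two wheels of each bike
  have hcase : ∀ p : Fin V0,
      ((∀ j : ZMod n, col (Sum.inl (p, Sum.inl (true, j, cF p true j))) = true) ∧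
       (∀ j : ZMod n, col (Sum.inl (p, Sum.inl (false, j, cF p false j))) = false)) ∨
      ((∀ j : ZMod n, col (Sum.inl (p, Sum.inl (true, j, cF p true j))) = false) ∧
       (∀ j : ZMod n, col (Sum.inl (p, Sum.inl (false, j, cF p false j))) = true)) := by
    intro p
    rcases hmono p true with h1 | h1 <;> rcases hmono p false with h2 | h2
    · -- both wheels all-F-coloured: the copy q_F matches
      exfalso; apply hcol
      refine ⟨fun v => Sum.inl (p, embF n (cF p) (iB p) (fB p true) (fB p false) v), ?_⟩
      intro a ha
      rcases ha with ⟨i, him, rfl⟩ | ⟨i, hiF, rfl⟩ | ⟨i, hiT, rfl⟩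
      · exact hsatR _ _ _ _ (hmemF p _ (Or.inr (Or.inr ⟨hqR i him, by simp⟩)))
      · by_cases e1 : i = fB p true
        · subst e1
          refine hsatF _ _ (Or.inr ?_)
          have e : embF n (cF p) (iB p) (fB p true) (fB p false) (fB p true)
              = Sum.inl (true, iB p true, cF p true (iB p true)) := by simp [embF]
          simp only [e]
          exact ⟨hund p true (iB p true), h1 _⟩
        · by_cases e2 : i = fB p false
          · subst e2
            refine hsatF _ _ (Or.inr ?_)
            have e : embF n (cF p) (iB p) (fB p true) (fB p false) (fB p false)
                = Sum.inl (false, iB p false, cF p false (iB p false)) := by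
              simp [embF, (hfBlt p).ne']
            simp only [e]
            exact ⟨hund p false (iB p false), h2 _⟩
          · exact hsatF _ _ (Or.inl (hmemF p _
              (Or.inr (Or.inr ⟨hqF i hiF, by simp [e1, e2]⟩))))
      · exact hsatT _ _ (Or.inl (hmemF p _ (Or.inr (Or.inr ⟨hqT i hiT, by simp⟩))))
    · exact Or.inl ⟨h1, h2⟩
    · exact Or.inr ⟨h1, h2⟩
    · -- both wheels all-T-coloured: the copy q_T matches
      exfalso; apply hcol
      refine ⟨fun v => Sum.inl (p, embT n (cF p) (jB p) (tB p true) (tB p false) v), ?_⟩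
      intro a ha
      rcases ha with ⟨i, him, rfl⟩ | ⟨i, hiF, rfl⟩ | ⟨i, hiT, rfl⟩
      · exact hsatR _ _ _ _ (hmemT p _ (Or.inr (Or.inr ⟨hqR i him, by simp⟩)))
      · exact hsatF _ _ (Or.inl (hmemT p _ (Or.inr (Or.inr ⟨hqF i hiF, by simp⟩))))
      · by_cases e1 : i = tB p true
        · subst e1
          refine hsatT _ _ (Or.inr ?_)
          have e : embT n (cF p) (jB p) (tB p true) (tB p false) (tB p true)
              = Sum.inl (true, jB p true, cF p true (jB p true)) := by simp [embT]
          simp only [e]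
          exact ⟨hund p true (jB p true), h1 _⟩
        · by_cases e2 : i = tB p false
          · subst e2
            refine hsatT _ _ (Or.inr ?_)
            have e : embT n (cF p) (jB p) (tB p true) (tB p false) (tB p false)
                = Sum.inl (false, jB p false, cF p false (jB p false)) := by
              simp [embT, (htBlt p).ne']
            simp only [e]
            exact ⟨hund p false (jB p false), h2 _⟩
          · exact hsatT _ _ (Or.inl (hmemT p _
              (Or.inr (Or.inr ⟨hqT i hiT, by simp [e1, e2]⟩))))
  -- the clause gadgets
  have hclause : ∀ c : Fin K, ∃ z : Fin 3,
      ¬ col (Sum.inl ((ψ c z).2, Sum.inl (wSel FL TL ψ l c z, gi c z,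
          cF (ψ c z).2 (wSel FL TL ψ l c z) (gi c z)))) = (if l z ∈ FL then true else false) := by
    intro c
    by_contra hcon
    push_neg at hcon
    apply hcol
    refine ⟨embC n ψ cF FL TL l gi c, ?_⟩
    intro a ha
    have hl20 : l 2 ≠ l 0 := (hl12.trans hl23).ne'
    have hl21 : l 2 ≠ l 1 := hl23.ne'
    have hl10 : l 1 ≠ l 0 := hl12.ne'
    have he0 : embC n ψ cF FL TL l gi c (l 0)
        = Sum.inl ((ψ c 0).2, Sum.inl (wSel FL TL ψ l c 0, gi c 0,
            cF (ψ c 0).2 (wSel FL TL ψ l c 0) (gi c 0))) := by simp [embC, cTgt]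
    have he1 : embC n ψ cF FL TL l gi c (l 1)
        = Sum.inl ((ψ c 1).2, Sum.inl (wSel FL TL ψ l c 1, gi c 1,
            cF (ψ c 1).2 (wSel FL TL ψ l c 1) (gi c 1))) := by simp [embC, cTgt, hl10]
    have he2 : embC n ψ cF FL TL l gi c (l 2)
        = Sum.inl ((ψ c 2).2, Sum.inl (wSel FL TL ψ l c 2, gi c 2,
            cF (ψ c 2).2 (wSel FL TL ψ l c 2) (gi c 2))) := by simp [embC, cTgt, hl20, hl21]
    rcases ha with ⟨i, him, rfl⟩ | ⟨i, hiF, rfl⟩ | ⟨i, hiT, rfl⟩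
    · exact hsatR _ _ _ _ (hmemC c _ (Or.inr (Or.inr (Or.inr ⟨hqR i him, by simp⟩))))
    · by_cases e0 : i = l 0
      · subst e0
        refine hsatF _ _ (Or.inr ?_)
        simp only [he0]
        refine ⟨hund _ _ _, ?_⟩
        have h := hcon 0
        rwa [if_pos hiF] at h
      · by_cases e1 : i = l 1
        · subst e1
          refine hsatF _ _ (Or.inr ?_)
          simp only [he1]
          refine ⟨hund _ _ _, ?_⟩
          have h := hcon 1
          rwa [if_pos hiF] at h
        · by_cases e2 : i = l 2
          · subst e2
            refine hsatF _ _ (Or.inr ?_)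
            simp only [he2]
            refine ⟨hund _ _ _, ?_⟩
            have h := hcon 2
            rwa [if_pos hiF] at h
          · exact hsatF _ _ (Or.inl (hmemC c _
              (Or.inr (Or.inr (Or.inr ⟨hqF i hiF, by simp [e0, e1, e2]⟩)))))
    · by_cases e0 : i = l 0
      · subst e0
        refine hsatT _ _ (Or.inr ?_)
        simp only [he0]
        refine ⟨hund _ _ _, ?_⟩
        have h := hcon 0
        rwa [if_neg (fun hh => hFT hh hiT)] at h
      · by_cases e1 : i = l 1
        · subst e1
          refine hsatT _ _ (Or.inr ?_)
          simp only [he1]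
          refine ⟨hund _ _ _, ?_⟩
          have h := hcon 1
          rwa [if_neg (fun hh => hFT hh hiT)] at h
        · by_cases e2 : i = l 2
          · subst e2
            refine hsatT _ _ (Or.inr ?_)
            simp only [he2]
            refine ⟨hund _ _ _, ?_⟩
            have h := hcon 2
            rwa [if_neg (fun hh => hFT hh hiT)] at h
          · exact hsatT _ _ (Or.inl (hmemC c _
              (Or.inr (Or.inr (Or.inr ⟨hqT i hiT, by simp [e0, e1, e2]⟩)))))
  -- the assignment
  refine ⟨fun p => !col (Sum.inl (p, Sum.inl (true, 0, cF p true 0))), ?_⟩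
  intro c
  obtain ⟨z, hz⟩ := hclause c
  refine ⟨z, ?_⟩
  show (!col (Sum.inl ((ψ c z).2, Sum.inl (true, 0, cF (ψ c z).2 true 0)))) = (ψ c z).1
  rcases hlFT z with hzF | hzT
  · rw [if_pos hzF] at hz
    rw [Bool.not_eq_true] at hz
    rcases Bool.eq_false_or_eq_true (ψ c z).1 with hs | hs
    · -- positive literal, F-node: wheel •
      have hw : wSel FL TL ψ l c z = true := by
        simp only [wSel]; rw [if_pos (Or.inl ⟨hs, hzF⟩)]
      rw [hw] at hz
      rcases hcase (ψ c z).2 with ⟨h1, h2⟩ | ⟨h1, h2⟩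
      · rw [h1 (gi c z)] at hz; exact Bool.noConfusion hz
      · rw [hs, h1 0]; rfl
    · -- negative literal, F-node: wheel ∘
      have hw : wSel FL TL ψ l c z = false := by
        simp only [wSel]
        rw [if_neg]
        rintro (⟨h1, -⟩ | ⟨-, h2⟩)
        · rw [hs] at h1; exact Bool.noConfusion h1
        · exact hFT hzF h2
      rw [hw] at hz
      rcases hcase (ψ c z).2 with ⟨h1, h2⟩ | ⟨h1, h2⟩
      · rw [hs, h1 0]; rfl
      · rw [h2 (gi c z)] at hz; exact Bool.noConfusion hz
  · rw [if_neg (fun h => hFT h hzT)] at hz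
    rw [Bool.not_eq_false] at hz
    rcases Bool.eq_false_or_eq_true (ψ c z).1 with hs | hs
    · -- positive literal, T-node: wheel ∘
      have hw : wSel FL TL ψ l c z = false := by
        simp only [wSel]
        rw [if_neg]
        rintro (⟨-, h1⟩ | ⟨h2, -⟩)
        · exact hFT h1 hzT
        · rw [hs] at h2; exact Bool.noConfusion h2
      rw [hw] at hz
      rcases hcase (ψ c z).2 with ⟨h1, h2⟩ | ⟨h1, h2⟩
      · rw [h2 (gi c z)] at hz; exact Bool.noConfusion hz
      · rw [hs, h1 0]; rfl
    · -- negative literal, T-node: wheel •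
      have hw : wSel FL TL ψ l c z = true := by
        simp only [wSel]; rw [if_pos (Or.inr ⟨hs, hzT⟩)]
      rw [hw] at hz
      rcases hcase (ψ c z).2 with ⟨h1, h2⟩ | ⟨h1, h2⟩
      · rw [hs, h1 0]; rfl
      · rw [h1 (gi c z)] at hz; exact Bool.noConfusion hz

end DS
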